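/- arXiv:1103.4173 — 2 statements merged into one kernel-verified Lean document; each statement's English description precedes it below -/
import Mathlib

section
/- Let (R, m, k) be a Noetherian local ring of prime characteristic p > 0 and M a finitely generated R-module. Then there exists a positive constant C such that for all e ∈ ℕ and every ideal I of R containing m^[p^e] (the ideal generated by p^e-th powers of elements of m), the length of (R/I) ⊗_R M is at most C·p^(e·dim M). -/
set_option linter.unusedVariables false

open Filter IsLocalRing

/-- `I^[q]` : the ideal generated by the `q`-th powers of the elements of `I`. -/
def Ideal.bracketPow {R : Type*} [CommSemiring R] (I : Ideal R) (q : ℕ) : Ideal R :=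
  Ideal.span ((fun x => x ^ q) '' (I : Set R))

/-- The length of the `R`-module `M` (as a natural number; junk value when infinite),
computed as the Krull dimension of the lattice of submodules of `M`. -/
noncomputable def mlength (R M : Type*) [Ring R] [AddCommGroup M] [Module R M] : ℕ :=
  (WithBot.unbotD 0 (Order.krullDim (Submodule R M))).toNat

/-- The length of `(R ⧸ I) ⊗_R M`. -/
noncomputable def lenTensor (R : Type*) [CommRing R] (M : Type*) [AddCommGroup M] [Module R M]
    (I : Ideal R) : ℕ :=
  mlength R (TensorProduct R (R ⧸ I) M)

/-- Type synonym: `M` viewed as an `R`-module via the `e`-th iterate of Frobenius,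
i.e. `F^e_* M`. -/
def FrobMod (R : Type*) (p e : ℕ) (M : Type*) : Type _ := M

/-- `F^e_* m`, the element of `F^e_* M` corresponding to `m : M`. -/
def FrobMod.of (R : Type*) (p e : ℕ) {M : Type*} (m : M) : FrobMod R p e M := m

instance FrobMod.instAddCommGroup {R M : Type*} {p e : ℕ} [AddCommGroup M] :
    AddCommGroup (FrobMod R p e M) := inferInstanceAs (AddCommGroup M)

noncomputable instance FrobMod.instModule {R : Type*} [CommSemiring R] {p e : ℕ} [ExpChar R p]
    {M : Type*} [AddCommGroup M] [Module R M] : Module R (FrobMod R p e M) :=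
  Module.compHom M (iterateFrobenius R p e)

/-- `M` has a free direct summand (isomorphic to `R`). -/
def HasFreeDirectSummand (R M : Type*) [CommRing R] [AddCommGroup M] [Module R M] : Prop :=
  ∃ N N' : Submodule R M, IsCompl N N' ∧ Nonempty (N ≃ₗ[R] R)

/-- `R` is `F`-finite: the Frobenius endomorphism is a finite ring homomorphism,
i.e. `F_* R` is a finitely generated `R`-module. -/
def FFinite (R : Type*) [CommRing R] (p : ℕ) [ExpChar R p] : Prop :=
  RingHom.Finite (frobenius R p)

/-- The set `I_e = { r : R | φ (F^e_* r) ∈ 𝔪 for all φ ∈ Hom_R (F^e_* R, R) }`. -/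
def splittingSet (R : Type*) [CommRing R] [IsLocalRing R] (p e : ℕ) [ExpChar R p] : Set R :=
  {r : R | ∀ φ : FrobMod R p e R →ₗ[R] R, φ (FrobMod.of R p e r) ∈ maximalIdeal R}

/-- `α = α(R) = log_p [k : k^p]`, encoded as `[k^{1/p} : k] = p ^ α` for the residue field `k`. -/
def IsAlphaOf (R : Type*) [CommRing R] [IsLocalRing R] (p : ℕ)
    [ExpChar (ResidueField R) p] (α : ℕ) : Prop :=
  Module.finrank (ResidueField R) (FrobMod (ResidueField R) p 1 (ResidueField R)) = p ^ α

/-- `b` records, for each `e`, a direct sum decomposition `F^e_* M ≅ R^{b e} ⊕ N_e`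
where `N_e` has no free direct summand; i.e. `b e` is the `e`-th Frobenius splitting
number of `M`. -/
def IsFrobSplittingNumbersOf (R : Type*) [CommRing R] (p : ℕ) [ExpChar R p]
    (M : Type*) [AddCommGroup M] [Module R M] (b : ℕ → ℕ) : Prop :=
  ∀ e : ℕ, ∃ Fe Ne : Submodule R (FrobMod R p e M),
    IsCompl Fe Ne ∧ Nonempty (Fe ≃ₗ[R] (Fin (b e) → R)) ∧ ¬ HasFreeDirectSummand R Ne

/-- `a e` is the `e`-th Frobenius splitting number of `R`:
`F^e_* R ≅ R^{a e} ⊕ M_e` with `M_e` having no free direct summand. -/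
def IsFrobSplittingNumbers (R : Type*) [CommRing R] (p : ℕ) [ExpChar R p] (a : ℕ → ℕ) : Prop :=
  IsFrobSplittingNumbersOf R p R a

/-- A local ring is regular if its maximal ideal is generated by `dim R` elements. -/
def RegularLocal (R : Type*) [CommRing R] [IsLocalRing R] : Prop :=
  ∃ s : Finset R, Ideal.span (s : Set R) = maximalIdeal R ∧
    (s.card : WithBot (WithTop ℕ)) = ringKrullDim R

/-- A local ring is Cohen–Macaulay if there is a regular sequence in the maximal ideal
of length `dim R`. -/
def CohenMacaulayLocal (R : Type*) [CommRing R] [IsLocalRing R] : Prop :=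
  ∃ rs : List R, (∀ r ∈ rs, r ∈ maximalIdeal R) ∧ RingTheory.Sequence.IsRegular R rs ∧
    (rs.length : WithBot (WithTop ℕ)) = ringKrullDim R

/-- `R` is strongly `F`-regular: for every `c` not in any minimal prime there are `e`
and `φ : F^e_* R → R` with `φ (F^e_* c) = 1`. -/
def StronglyFRegular (R : Type*) [CommRing R] (p : ℕ) [ExpChar R p] : Prop :=
  ∀ c : R, (∀ P ∈ minimalPrimes R, c ∉ P) →
    ∃ (e : ℕ) (φ : FrobMod R p e R →ₗ[R] R), φ (FrobMod.of R p e c) = 1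


section Aux
open Order Submodule Pointwise IsLocalRing
universe u

set_option linter.unusedSectionVars false



noncomputable def elen (R M : Type*) [Ring R] [AddCommGroup M] [Module R M] : ℕ∞ :=
  Order.height (⊤ : Submodule R M)

section elen
variable {R M N : Type*} [Ring R] [AddCommGroup M] [Module R M] [AddCommGroup N] [Module R N]

lemma height_add_one_le {α : Type*} [Preorder α] {x y : α} (h : x < y) :
    Order.height x + 1 ≤ Order.height y := by
  rcases eq_or_ne (Order.height x) ⊤ with hx | hx
  · have : Order.height y = ⊤ := top_le_iff.mp (hx ▸ Order.height_mono h.le)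
    simp [this]
  · exact Order.add_one_le_of_lt (Order.height_strictMono h (lt_top_iff_ne_top.mpr hx))

lemma elen_le_of_surjective (f : M →ₗ[R] N) (hf : Function.Surjective f) :
    elen R N ≤ elen R M := by
  have hmono : Monotone (Submodule.comap f : Submodule R N → Submodule R M) :=
    fun _ _ h => Submodule.comap_mono h
  have hs : StrictMono (Submodule.comap f : Submodule R N → Submodule R M) :=
    hmono.strictMono_of_injective (Submodule.comap_injective_of_surjective hf)
  simpa [elen] using Order.height_le_height_apply_of_strictMono _ hs (⊤ : Submodule R N)

lemma elen_eq_of_equiv (e : M ≃ₗ[R] N) : elen R M = elen R N :=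
  le_antisymm (elen_le_of_surjective e.symm.toLinearMap e.symm.surjective)
    (elen_le_of_surjective e.toLinearMap e.surjective)

lemma elen_submodule_le (P : Submodule R M) : elen R P ≤ elen R M := by
  have hmono : Monotone (Submodule.map P.subtype : Submodule R P → Submodule R M) :=
    fun _ _ h => Submodule.map_mono h
  have hs : StrictMono (Submodule.map P.subtype : Submodule R P → Submodule R M) :=
    hmono.strictMono_of_injective (Submodule.map_injective_of_injective P.injective_subtype)
  refine le_trans (Order.height_le_height_apply_of_strictMono _ hs (⊤ : Submodule R P)) ?_
  exact Order.height_mono le_top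

lemma elen_subsingleton [Subsingleton M] : elen R M = 0 := by
  unfold elen
  rw [Order.height_eq_zero]
  intro P _
  exact le_of_eq (Subsingleton.elim _ _)

lemma length_le_aux (P : Submodule R M) :
    ∀ (n : ℕ) (p : LTSeries (Submodule R M)), p.length = n →
    (p.length : ℕ∞) ≤ Order.height (Submodule.comap P.subtype p.last) +
      Order.height (Submodule.map P.mkQ p.last) := by
  intro n
  induction n with
  | zero => intro p hn; simp [hn]
  | succ n ih =>
    intro p hn
    have hlen : p.eraseLast.length = n := by simp [hn]
    have hlt : p.eraseLast.last < p.last := p.eraseLast_last_rel_last (by omega)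
    have ihe := ih p.eraseLast hlen
    rw [hlen] at ihe
    have hmapmono : Monotone (Submodule.map P.subtype : Submodule R P → Submodule R M) :=
      fun _ _ h => Submodule.map_mono h
    have hmaps : StrictMono (Submodule.map P.subtype : Submodule R P → Submodule R M) :=
      hmapmono.strictMono_of_injective (Submodule.map_injective_of_injective P.injective_subtype)
    have key : Submodule.comap P.subtype p.eraseLast.last < Submodule.comap P.subtype p.last ∨
        Submodule.map P.mkQ p.eraseLast.last < Submodule.map P.mkQ p.last := by
      rcases (Submodule.map_mono (f := P.mkQ) hlt.le).lt_or_eq with h2 | h2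
      · exact Or.inr h2
      left
      have e2 : p.last ⊔ P ≤ p.eraseLast.last ⊔ P := by
        rw [sup_comm, sup_comm (a := p.eraseLast.last),
          ← Submodule.comap_map_mkQ, ← Submodule.comap_map_mkQ, h2]
      have hinf := inf_lt_inf_of_lt_of_sup_le_sup hlt e2
      refine lt_of_le_of_ne (Submodule.comap_mono hlt.le) (fun heq => hinf.ne ?_)
      have hcg := congrArg (Submodule.map P.subtype) heq
      rwa [Submodule.map_comap_subtype, Submodule.map_comap_subtype, inf_comm,
        inf_comm (a := P)] at hcg
    rw [hn]
    push_cast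
    rcases key with h | h
    · calc (n : ℕ∞) + 1 ≤ (Order.height (Submodule.comap P.subtype p.eraseLast.last) + 1) +
            Order.height (Submodule.map P.mkQ p.eraseLast.last) := by
            rw [add_right_comm]; exact add_le_add_left ihe 1
        _ ≤ _ := add_le_add (_root_.height_add_one_le h) (Order.height_mono (Submodule.map_mono hlt.le))
    · calc (n : ℕ∞) + 1 ≤ Order.height (Submodule.comap P.subtype p.eraseLast.last) +
            (Order.height (Submodule.map P.mkQ p.eraseLast.last) + 1) := by
            rw [← add_assoc]; exact add_le_add_left ihe 1
        _ ≤ _ := add_le_add (Order.height_mono (Submodule.comap_mono hlt.le)) (_root_.height_add_one_le h)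

lemma elen_subadd (P : Submodule R M) : elen R M ≤ elen R P + elen R (M ⧸ P) := by
  rw [elen]
  apply Order.height_le
  intro p hp
  have := length_le_aux P p.length p rfl
  rw [hp] at this
  simpa [elen, Submodule.comap_top, Submodule.map_top, Submodule.range_mkQ] using this

lemma mlength_le_of_elen_le {n : ℕ} (h : elen R M ≤ n) :
    (WithBot.unbotD 0 (Order.krullDim (Submodule R M))).toNat ≤ n := by
  have hsup : (⨆ (p : LTSeries (Submodule R M)), (p.length : ℕ∞)) ≤ (n : ℕ∞) := by
    apply iSup_le
    intro p
    have h1 : (p.length : ℕ∞) ≤ Order.height (⊤ : Submodule R M) :=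
      Order.length_le_height le_top
    exact le_trans h1 h
  have hk : Order.krullDim (Submodule R M) ≤ ((n : ℕ∞) : WithBot ℕ∞) := by
    rw [Order.krullDim_eq_iSup_length]
    exact_mod_cast hsup
  rcases hq : Order.krullDim (Submodule R M) with _ | q
  · exact Nat.zero_le n
  · rw [hq] at hk
    have hqn : q ≤ (n : ℕ∞) := WithBot.coe_le_coe.mp hk
    have := ENat.toNat_le_toNat hqn (by simp)
    exact (by simpa using this : q.toNat ≤ n)
end elen


section filt
variable {R : Type*} [CommRing R] {M : Type*} [AddCommGroup M] [Module R M]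

lemma elen_quot_mono {P Q : Submodule R M} (h : P ≤ Q) :
    elen R (M ⧸ Q) ≤ elen R (M ⧸ P) := by
  apply elen_le_of_surjective (Submodule.mapQ P Q LinearMap.id h)
  intro y
  obtain ⟨m, rfl⟩ := Q.mkQ_surjective y
  exact ⟨P.mkQ m, by simp [Submodule.mapQ_apply]⟩

lemma elen_quot_sup (I J : Ideal R) :
    elen R (M ⧸ ((I ⊔ J) • ⊤ : Submodule R M)) =
      elen R ((M ⧸ (I • ⊤ : Submodule R M)) ⧸
        (J • (⊤ : Submodule R (M ⧸ (I • ⊤ : Submodule R M))))) := by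
  have hle : (I • ⊤ : Submodule R M) ≤ (I ⊔ J) • ⊤ :=
    Submodule.smul_mono_left le_sup_left
  have key : Submodule.map ((I • ⊤ : Submodule R M)).mkQ ((I ⊔ J) • ⊤ : Submodule R M) =
      (J • ⊤ : Submodule R (M ⧸ (I • ⊤ : Submodule R M))) := by
    rw [Submodule.sup_smul, Submodule.map_sup]
    have h1 : Submodule.map ((I • ⊤ : Submodule R M)).mkQ (I • ⊤ : Submodule R M) = ⊥ := by
      exact Submodule.mkQ_map_self _
    rw [h1, bot_sup_eq, Submodule.map_smul'', Submodule.map_top, Submodule.range_mkQ]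
  rw [← key]
  exact (elen_eq_of_equiv
    (Submodule.quotientQuotientEquivQuotient (I • ⊤) ((I ⊔ J) • ⊤) hle)).symm

lemma elen_step (x : R) (q : ℕ) :
    elen R (M ⧸ ((Ideal.span {x} ^ (q + 1)) • ⊤ : Submodule R M)) ≤
      elen R (M ⧸ ((Ideal.span {x} ^ q) • ⊤ : Submodule R M)) +
      elen R (M ⧸ ((Ideal.span {x}) • ⊤ : Submodule R M)) := by
  set I := Ideal.span {x} with hI
  set S : Submodule R M := (I ^ (q + 1)) • ⊤ with hS
  set T : Submodule R M := (I ^ q) • ⊤ with hT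
  have hST : S ≤ T := Submodule.smul_mono_left (Ideal.pow_le_pow_right (Nat.le_succ q))
  have hxq : x ^ q ∈ I ^ q := Ideal.pow_mem_pow (Ideal.mem_span_singleton_self x) q
  -- the map g : M → M ⧸ S, m ↦ x^q • m
  set g : M →ₗ[R] (M ⧸ S) := S.mkQ ∘ₗ LinearMap.lsmul R M (x ^ q) with hg
  have hker : (I • ⊤ : Submodule R M) ≤ LinearMap.ker g := by
    intro m hm
    have : x ^ q • m ∈ S := by
      rw [hS, pow_succ, ← Ideal.smul_eq_mul, Submodule.smul_assoc]
      exact Submodule.smul_mem_smul hxq hm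
    rw [LinearMap.mem_ker, hg]
    show S.mkQ (x ^ q • m) = 0
    rw [Submodule.mkQ_apply, Submodule.Quotient.mk_eq_zero]
    exact this
  set N' : Submodule R (M ⧸ S) := Submodule.map S.mkQ T with hN'
  have hrange : ∀ m : M, g m ∈ N' := fun m =>
    Submodule.mem_map_of_mem (Submodule.smul_mem_smul hxq trivial)
  set f : (M ⧸ (I • ⊤ : Submodule R M)) →ₗ[R] N' :=
    LinearMap.codRestrict N' ((I • ⊤ : Submodule R M).liftQ g hker) (by
      intro c
      obtain ⟨m, rfl⟩ := Submodule.Quotient.mk_surjective _ c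
      simpa [Submodule.liftQ_apply] using hrange m) with hf
  have hfsurj : Function.Surjective f := by
    rintro ⟨y, hy⟩
    obtain ⟨t, ht, rfl⟩ := hy
    have ht' : t ∈ (x ^ q) • (⊤ : Submodule R M) := by
      rwa [hT, Ideal.span_singleton_pow, Submodule.ideal_span_singleton_smul] at ht
    obtain ⟨m, -, rfl⟩ := ht'
    refine ⟨Submodule.Quotient.mk m, ?_⟩
    apply Subtype.ext
    simp [hf, Submodule.liftQ_apply, hg]
  have h1 := elen_subadd (R := R) (M := M ⧸ S) N'
  have h2 : elen R ((M ⧸ S) ⧸ N') = elen R (M ⧸ T) :=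
    elen_eq_of_equiv (Submodule.quotientQuotientEquivQuotient S T hST)
  have h3 : elen R N' ≤ elen R (M ⧸ (I • ⊤ : Submodule R M)) :=
    elen_le_of_surjective f hfsurj
  calc elen R (M ⧸ S) ≤ elen R N' + elen R ((M ⧸ S) ⧸ N') := h1
    _ ≤ elen R (M ⧸ (I • ⊤ : Submodule R M)) + elen R (M ⧸ T) := by
        rw [h2]; exact add_le_add h3 le_rfl
    _ = elen R (M ⧸ T) + elen R (M ⧸ (I • ⊤ : Submodule R M)) := add_comm _ _

lemma elen_pow_le (x : R) (q : ℕ) :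
    elen R (M ⧸ ((Ideal.span {x} ^ q) • ⊤ : Submodule R M)) ≤
      (q : ℕ∞) * elen R (M ⧸ ((Ideal.span {x}) • ⊤ : Submodule R M)) := by
  induction q with
  | zero =>
    have : ((Ideal.span {x} ^ 0 : Ideal R) • ⊤ : Submodule R M) = ⊤ := by
      simp [Ideal.one_eq_top, Submodule.top_smul]
    rw [this]
    haveI : Subsingleton (M ⧸ (⊤ : Submodule R M)) :=
      Submodule.Quotient.subsingleton_iff.mpr rfl
    simp [elen_subsingleton]
  | succ n ih =>
    calc elen R (M ⧸ ((Ideal.span {x} ^ (n + 1)) • ⊤ : Submodule R M)) ≤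
        elen R (M ⧸ ((Ideal.span {x} ^ n) • ⊤ : Submodule R M)) +
          elen R (M ⧸ ((Ideal.span {x}) • ⊤ : Submodule R M)) := elen_step x n
      _ ≤ (n : ℕ∞) * elen R (M ⧸ ((Ideal.span {x}) • ⊤ : Submodule R M)) +
          elen R (M ⧸ ((Ideal.span {x}) • ⊤ : Submodule R M)) := add_le_add ih le_rfl
      _ = ((n : ℕ∞) + 1) * elen R (M ⧸ ((Ideal.span {x}) • ⊤ : Submodule R M)) := by
          rw [add_mul, one_mul]
      _ = ((n + 1 : ℕ) : ℕ∞) * elen R (M ⧸ ((Ideal.span {x}) • ⊤ : Submodule R M)) := by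
          push_cast; ring_nf

end filt

section multi
variable {R : Type*} [CommRing R]

lemma elen_list_pow_le (q : ℕ) :
    ∀ (xs : List R) (M : Type*) [AddCommGroup M] [Module R M],
    elen R (M ⧸ ((Ideal.span {r | r ∈ xs.map (· ^ q)}) • ⊤ : Submodule R M)) ≤
      (q : ℕ∞) ^ xs.length * elen R (M ⧸ ((Ideal.span {r | r ∈ xs}) • ⊤ : Submodule R M)) := by
  intro xs
  induction xs with
  | nil =>
    intro M _ _
    simp
    exact le_rfl
  | cons x t ih =>
    intro M _ _
    have hset1 : {r | r ∈ (x :: t).map (· ^ q)} = insert (x ^ q) {r | r ∈ t.map (· ^ q)} := by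
      ext r; simp [List.mem_cons]
    have hset2 : {r | r ∈ (x :: t)} = insert x {r | r ∈ t} := by
      ext r; simp [List.mem_cons]
    have hspan1 : Ideal.span {r | r ∈ (x :: t).map (· ^ q)} =
        Ideal.span {x ^ q} ⊔ Ideal.span {r | r ∈ t.map (· ^ q)} := by
      rw [hset1, Ideal.span_insert]
    have hspan2 : Ideal.span {r | r ∈ (x :: t)} =
        Ideal.span {x} ⊔ Ideal.span {r | r ∈ t} := by
      rw [hset2, Ideal.span_insert]
    set M₁ := M ⧸ ((Ideal.span {x ^ q} : Ideal R) • ⊤ : Submodule R M)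
    set M₂ := M ⧸ ((Ideal.span {r | r ∈ t} : Ideal R) • ⊤ : Submodule R M)
    calc elen R (M ⧸ ((Ideal.span {r | r ∈ (x :: t).map (· ^ q)}) • ⊤ : Submodule R M))
        = elen R (M₁ ⧸ ((Ideal.span {r | r ∈ t.map (· ^ q)}) • ⊤ : Submodule R M₁)) := by
          rw [hspan1]; exact elen_quot_sup _ _
      _ ≤ (q : ℕ∞) ^ t.length *
            elen R (M₁ ⧸ ((Ideal.span {r | r ∈ t}) • ⊤ : Submodule R M₁)) := ih M₁
      _ = (q : ℕ∞) ^ t.length *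
            elen R (M₂ ⧸ ((Ideal.span {x ^ q}) • ⊤ : Submodule R M₂)) := by
          congr 1
          rw [← elen_quot_sup, sup_comm, elen_quot_sup]
      _ ≤ (q : ℕ∞) ^ t.length * ((q : ℕ∞) *
            elen R (M₂ ⧸ ((Ideal.span {x}) • ⊤ : Submodule R M₂))) := by
          apply mul_le_mul_right
          rw [← Ideal.span_singleton_pow]
          exact elen_pow_le x q
      _ = (q : ℕ∞) ^ (x :: t).length *
            elen R (M ⧸ ((Ideal.span {r | r ∈ (x :: t)}) • ⊤ : Submodule R M)) := by
          rw [hspan2, sup_comm, elen_quot_sup]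
          rw [List.length_cons, pow_succ, mul_assoc]

end multi


section fin
variable {R : Type*} [CommRing R] [IsLocalRing R] [IsNoetherianRing R]

/-- Chains of subspaces of a finite dimensional vector space are bounded by the dimension. -/
lemma vs_chain_le {K V : Type*} [DivisionRing K] [AddCommGroup V] [Module K V]
    [FiniteDimensional K V] :
    Order.height (⊤ : Submodule K V) ≤ (Module.finrank K V : ℕ∞) := by
  apply Order.height_le
  intro p hp
  suffices h : ∀ (n : ℕ) (p : LTSeries (Submodule K V)), p.length = n →
      p.length ≤ Module.finrank K p.last by
    have := h p.length p rfl
    rw [hp, finrank_top] at this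
    exact_mod_cast this
  intro n
  induction n with
  | zero => intro p hn; simp [hn]
  | succ n ih =>
    intro p hn
    have hlen : p.eraseLast.length = n := by simp [hn]
    have hlt : p.eraseLast.last < p.last := p.eraseLast_last_rel_last (by omega)
    have h1 := ih p.eraseLast hlen
    have h2 : Module.finrank K p.eraseLast.last < Module.finrank K p.last :=
      Submodule.finrank_lt_finrank_of_lt hlt
    omega

set_option maxHeartbeats 1000000 in
/-- A finitely generated module over the local ring `R` killed by the maximal ideal has
finite length, bounded by the residue-field dimension. -/
lemma elen_ne_top_of_smul_top_eq_bot (X : Type u) [AddCommGroup X] [Module R X]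
    [Module.Finite R X] (h : (maximalIdeal R • ⊤ : Submodule R X) = ⊥) :
    elen R X ≠ ⊤ := by
  have htor : Module.IsTorsionBySet R X (maximalIdeal R) := by
    intro x r
    have : (r : R) • x ∈ (maximalIdeal R • ⊤ : Submodule R X) :=
      Submodule.smul_mem_smul r.2 trivial
    rw [h] at this
    simpa using this
  letI instF : Field (R ⧸ maximalIdeal R) := Ideal.Quotient.field (maximalIdeal R)
  letI : Module (R ⧸ maximalIdeal R) X := htor.module
  letI : IsScalarTower R (R ⧸ maximalIdeal R) X := htor.isScalarTower
  haveI : Module.Finite (R ⧸ maximalIdeal R) X :=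
    Module.Finite.of_restrictScalars_finite R (R ⧸ maximalIdeal R) X
  -- transfer chains
  set f : Submodule R X → Submodule (R ⧸ maximalIdeal R) X := fun P =>
    { carrier := P
      add_mem' := fun ha hb => P.add_mem ha hb
      zero_mem' := P.zero_mem
      smul_mem' := by
        intro c v hv
        obtain ⟨r, rfl⟩ := Ideal.Quotient.mk_surjective c
        have : (Ideal.Quotient.mk (maximalIdeal R) r) • v = r • v :=
          htor.mk_smul r v
        rw [this]
        exact P.smul_mem r hv } with hf
  have hfs : StrictMono f := by
    intro P Q hPQ
    rw [← SetLike.coe_ssubset_coe] at hPQ ⊢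
    exact hPQ
  have h1 : elen R X ≤ Order.height (f ⊤) :=
    Order.height_le_height_apply_of_strictMono f hfs ⊤
  have h2 : Order.height (f ⊤) ≤ Order.height (⊤ : Submodule (R ⧸ maximalIdeal R) X) :=
    Order.height_mono le_top
  have h3 := vs_chain_le (K := R ⧸ maximalIdeal R) (V := X)
  have := le_trans (le_trans h1 h2) h3
  intro hcon
  rw [hcon] at this
  simp at this

lemma elen_ne_top_of_pow_smul_top_eq_bot :
    ∀ (s : ℕ) (X : Type u) [AddCommGroup X] [Module R X] [Module.Finite R X],
    ((maximalIdeal R ^ s) • ⊤ : Submodule R X) = ⊥ → elen R X ≠ ⊤ := by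
  intro s
  induction s with
  | zero =>
    intro X _ _ _ h
    rw [pow_zero, Ideal.one_eq_top, Submodule.top_smul] at h
    haveI : Subsingleton X := by
      rw [← Submodule.subsingleton_iff R]
      exact subsingleton_of_bot_eq_top h.symm
    rw [elen_subsingleton]
    simp
  | succ s ih =>
    intro X _ _ _ h
    set N : Submodule R X := maximalIdeal R • ⊤ with hN
    haveI : IsNoetherian R X := isNoetherian_of_isNoetherianRing_of_finite R X
    haveI : Module.Finite R N := Module.Finite.iff_fg.mpr (IsNoetherian.noetherian N)
    have hNkill : ((maximalIdeal R ^ s) • ⊤ : Submodule R N) = ⊥ := by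
      apply Submodule.map_injective_of_injective N.injective_subtype
      rw [Submodule.map_smul'', Submodule.map_top, Submodule.range_subtype, Submodule.map_bot]
      rw [← le_bot_iff, ← h, hN, ← Submodule.smul_assoc, Ideal.smul_eq_mul, ← pow_succ]
    have hQkill : (maximalIdeal R • ⊤ : Submodule R (X ⧸ N)) = ⊥ := by
      have heq : (maximalIdeal R • ⊤ : Submodule R (X ⧸ N)) =
          Submodule.map N.mkQ (maximalIdeal R • ⊤ : Submodule R X) := by
        rw [Submodule.map_smul'', Submodule.map_top, Submodule.range_mkQ]
      rw [heq, ← hN, Submodule.mkQ_map_self]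
    haveI : Module.Finite R (X ⧸ N) := Module.Finite.quotient R N
    have h1 := elen_subadd (R := R) (M := X) N
    have h2 := ih N hNkill
    have h3 := elen_ne_top_of_smul_top_eq_bot (X ⧸ N) hQkill
    intro hcon
    rw [hcon] at h1
    exact (WithTop.add_ne_top.mpr ⟨h2, h3⟩) (top_le_iff.mp h1)
end fin


section localquot
variable {A : Type u} [CommRing A] [IsLocalRing A]

lemma quot_isLocalRing {I : Ideal A} (hI : I ≠ ⊤) : IsLocalRing (A ⧸ I) := by
  haveI : Nontrivial (A ⧸ I) := Ideal.Quotient.nontrivial_iff.mpr hI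
  apply IsLocalRing.of_isUnit_or_isUnit_one_sub_self
  intro a
  obtain ⟨x, rfl⟩ := Ideal.Quotient.mk_surjective a
  rcases IsLocalRing.isUnit_or_isUnit_one_sub_self x with h | h
  · exact Or.inl (h.map (Ideal.Quotient.mk I))
  · right
    have := h.map (Ideal.Quotient.mk I)
    simpa using this

lemma quot_isUnit_iff {I : Ideal A} (hI : I ≤ maximalIdeal A) (x : A) :
    IsUnit (Ideal.Quotient.mk I x) ↔ IsUnit x := by
  constructor
  · intro h
    obtain ⟨u, hu⟩ := h
    obtain ⟨b, hb⟩ := Ideal.Quotient.mk_surjective (↑u⁻¹ : A ⧸ I)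
    have hxb : Ideal.Quotient.mk I (x * b) = 1 := by
      rw [map_mul, hb, ← hu]
      exact u.mul_inv
    have hmem : x * b - 1 ∈ I := by
      rw [← Ideal.Quotient.eq_zero_iff_mem]
      rw [map_sub, hxb, map_one, sub_self]
    have hxbm : x * b ∉ maximalIdeal A := by
      intro hc
      have h1 : (1 : A) ∈ maximalIdeal A := by
        have := (maximalIdeal A).sub_mem hc (hI hmem)
        simpa using this
      exact (maximalIdeal A).ne_top_iff_one.mp
        (Ideal.IsMaximal.ne_top (maximalIdeal.isMaximal A)) h1
    have : IsUnit (x * b) := by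
      by_contra hc
      exact hxbm (IsLocalRing.mem_maximalIdeal (x * b) |>.mpr hc)
    exact isUnit_of_mul_isUnit_left this
  · intro h
    exact h.map _

lemma quot_comap_maximalIdeal {I : Ideal A} (hI : I ≤ maximalIdeal A) :
    haveI := quot_isLocalRing (ne_top_of_le_ne_top
      (Ideal.IsMaximal.ne_top (maximalIdeal.isMaximal A)) hI)
    Ideal.comap (Ideal.Quotient.mk I) (maximalIdeal (A ⧸ I)) = maximalIdeal A := by
  haveI := quot_isLocalRing (ne_top_of_le_ne_top
    (Ideal.IsMaximal.ne_top (maximalIdeal.isMaximal A)) hI)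
  ext x
  rw [Ideal.mem_comap, IsLocalRing.mem_maximalIdeal, IsLocalRing.mem_maximalIdeal,
    mem_nonunits_iff, mem_nonunits_iff]
  exact not_congr (quot_isUnit_iff hI x)

end localquot

section dimension
variable {A : Type u} [CommRing A] [IsNoetherianRing A] [IsLocalRing A]

lemma dim_pos_of_prime_lt {P Q : Ideal A} (hP : P.IsPrime) (hQ : Q.IsPrime) (h : P < Q) :
    (1 : WithBot ℕ∞) ≤ ringKrullDim A := by
  let p : LTSeries (PrimeSpectrum A) :=
    (RelSeries.singleton _ (⟨Q, hQ⟩ : PrimeSpectrum A)).cons ⟨P, hP⟩ h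
  have := Order.LTSeries.length_le_krullDim p
  have hl : p.length = 1 := rfl
  rw [hl] at this
  simpa [ringKrullDim] using this

/-- If the maximal ideal is a minimal prime, some power of it is zero. -/
lemma max_minimal_nilpotent (hmin : maximalIdeal A ∈ minimalPrimes A) :
    ∃ s : ℕ, maximalIdeal A ^ s ≤ ⊥ := by
  have hrad : maximalIdeal A ≤ (⊥ : Ideal A).radical := by
    rw [Ideal.radical_eq_sInf]
    apply le_sInf
    rintro J ⟨-, hJ⟩
    have hJm : J ≤ maximalIdeal A := IsLocalRing.le_maximalIdeal hJ.ne_top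
    exact hmin.2 ⟨hJ, bot_le⟩ hJm
  exact Ideal.exists_pow_le_of_le_radical_of_fg hrad (IsNoetherian.noetherian _)

lemma max_mem_minimal_of_dim_le_zero (h : ringKrullDim A ≤ (0 : ℕ)) :
    maximalIdeal A ∈ minimalPrimes A := by
  haveI : (maximalIdeal A).IsPrime := (maximalIdeal.isMaximal A).isPrime
  obtain ⟨P, hP, hPle⟩ := Ideal.exists_minimalPrimes_le (I := ⊥) (J := maximalIdeal A) bot_le
  rcases eq_or_lt_of_le hPle with rfl | hlt
  · exact hP
  · exfalso
    have := le_trans (dim_pos_of_prime_lt hP.1.1 inferInstance hlt) h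
    norm_num at this
end dimension

lemma sop_exists :
    ∀ (d : ℕ) (A : Type u) [CommRing A] [IsNoetherianRing A] [IsLocalRing A],
    ringKrullDim A ≤ (d : ℕ) → ∃ (xs : List A) (s : ℕ), xs.length ≤ d ∧
      (∀ x ∈ xs, x ∈ maximalIdeal A) ∧ (maximalIdeal A) ^ s ≤ Ideal.span {a | a ∈ xs} := by
  intro d
  induction d with
  | zero =>
    intro A _ _ _ hd
    obtain ⟨s, hs⟩ := max_minimal_nilpotent (max_mem_minimal_of_dim_le_zero (by exact_mod_cast hd))
    exact ⟨[], s, by simp, by simp, by simpa using hs⟩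
  | succ d ih =>
    intro A _ _ _ hd
    by_cases hmin : maximalIdeal A ∈ minimalPrimes A
    · obtain ⟨s, hs⟩ := max_minimal_nilpotent hmin
      exact ⟨[], s, by simp, by simp, by simpa using hs⟩
    -- find x in the maximal ideal avoiding all minimal primes
    have hfin : (minimalPrimes A).Finite := minimalPrimes.finite_of_isNoetherianRing A
    have hnotle : ¬ ∃ P ∈ hfin.toFinset, maximalIdeal A ≤ P := by
      rintro ⟨P, hPs, hle⟩
      rw [Set.Finite.mem_toFinset] at hPs
      have : P ≤ maximalIdeal A := IsLocalRing.le_maximalIdeal hPs.1.1.ne_top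
      exact hmin (le_antisymm hle this ▸ hPs)
    have hsubset : ¬ (↑(maximalIdeal A) : Set A) ⊆ ⋃ P ∈ (hfin.toFinset : Finset (Ideal A)),
        (P : Set A) := by
      intro hsub
      apply hnotle
      exact (Ideal.subset_union_prime ⊤ ⊤ (fun P hPs _ _ =>
        (Set.Finite.mem_toFinset hfin |>.mp hPs).1.1)).mp hsub
    obtain ⟨x, hxm, hxU⟩ := Set.not_subset.mp hsubset
    have hxP : ∀ P ∈ minimalPrimes A, x ∉ P := by
      intro P hP hxmem
      exact hxU (Set.mem_biUnion (Set.Finite.mem_toFinset hfin |>.mpr hP) hxmem)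
    -- quotient
    have hxtop : Ideal.span {x} ≤ maximalIdeal A := by
      rw [Ideal.span_le, Set.singleton_subset_iff]; exact hxm
    have hne : Ideal.span {x} ≠ ⊤ := ne_top_of_le_ne_top
      (Ideal.IsMaximal.ne_top (maximalIdeal.isMaximal A)) hxtop
    set π := Ideal.Quotient.mk (Ideal.span {x}) with hπ
    haveI hloc : IsLocalRing (A ⧸ Ideal.span {x}) := quot_isLocalRing hne
    haveI : Nontrivial (A ⧸ Ideal.span {x}) := Ideal.Quotient.nontrivial_iff.mpr hne
    -- dimension drops
    have hdim : ringKrullDim (A ⧸ Ideal.span {x}) ≤ (d : ℕ) := by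
      have hcomap : StrictMono (fun P : PrimeSpectrum (A ⧸ Ideal.span {x}) =>
          (⟨Ideal.comap π P.asIdeal, Ideal.IsPrime.comap π⟩ : PrimeSpectrum A)) := by
        have hmono : Monotone (fun P : PrimeSpectrum (A ⧸ Ideal.span {x}) =>
            (⟨Ideal.comap π P.asIdeal, Ideal.IsPrime.comap π⟩ : PrimeSpectrum A)) :=
          fun P Q h => Ideal.comap_mono h
        apply hmono.strictMono_of_injective
        intro P Q h
        have := congrArg PrimeSpectrum.asIdeal h
        exact PrimeSpectrum.ext (Ideal.comap_injective_of_surjective π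
          Ideal.Quotient.mk_surjective this)
      rw [ringKrullDim, Order.krullDim_eq_iSup_length]
      show _ ≤ (((d : ℕ∞)) : WithBot ℕ∞)
      rw [WithBot.coe_le_coe]
      apply iSup_le
      intro p
      -- map the series into Spec A and extend by a minimal prime
      set q := p.map _ hcomap with hq
      obtain ⟨P₀, hP₀, hP₀le⟩ := Ideal.exists_minimalPrimes_le (I := ⊥)
        (J := q.head.asIdeal) bot_le
      have hxhead : x ∈ q.head.asIdeal := by
        rw [hq]
        show x ∈ Ideal.comap π p.head.asIdeal
        rw [Ideal.mem_comap]
        have : π x = 0 := by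
          rw [hπ, Ideal.Quotient.eq_zero_iff_mem]
          exact Ideal.mem_span_singleton_self x
        rw [this]
        exact (p.head.asIdeal).zero_mem
      have hlt : (⟨P₀, hP₀.1.1⟩ : PrimeSpectrum A) < q.head := by
        refine lt_of_le_of_ne hP₀le ?_
        intro hcon
        have : x ∈ P₀ := by rw [show P₀ = q.head.asIdeal from congrArg PrimeSpectrum.asIdeal hcon]; exact hxhead
        exact hxP P₀ hP₀ this
      set q' := q.cons ⟨P₀, hP₀.1.1⟩ hlt with hq'
      have hlen := Order.LTSeries.length_le_krullDim q'
      have hlen2 : (q'.length : WithBot ℕ∞) ≤ ((d : ℕ) + 1 : ℕ) := le_trans hlen (by exact_mod_cast hd)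
      have hq'len : q'.length = p.length + 1 := by
        rw [hq']; simp [hq]
      rw [hq'len] at hlen2
      have : p.length + 1 ≤ d + 1 := by exact_mod_cast hlen2
      exact_mod_cast Nat.lt_succ_iff.mp (Nat.lt_succ_of_le (by omega))
    obtain ⟨ys, s, hyslen, hysmem, hyspow⟩ := ih (A ⧸ Ideal.span {x}) hdim
    -- lift back
    set l : (A ⧸ Ideal.span {x}) → A := fun y => (Ideal.Quotient.mk_surjective y).choose with hl
    have hld : ∀ y, π (l y) = y := fun y => (Ideal.Quotient.mk_surjective y).choose_spec
    have hcomapmax := quot_comap_maximalIdeal hxtop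
    refine ⟨x :: ys.map l, s, by simpa using hyslen, ?_, ?_⟩
    · intro z hz
      rcases List.mem_cons.mp hz with rfl | hz
      · exact hxm
      · obtain ⟨y, hy, rfl⟩ := List.mem_map.mp hz
        have h1 : π (l y) ∈ maximalIdeal (A ⧸ Ideal.span {x}) := by
          rw [hld]; exact hysmem y hy
        rw [← hcomapmax]
        exact h1
    · intro z hz
      have h1 : π z ∈ (maximalIdeal (A ⧸ Ideal.span {x})) ^ s := by
        have hmapm : Ideal.map π (maximalIdeal A) ≤ maximalIdeal (A ⧸ Ideal.span {x}) := by
          rw [Ideal.map_le_iff_le_comap, hcomapmax]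
        have : π z ∈ Ideal.map π ((maximalIdeal A) ^ s) := Ideal.mem_map_of_mem π hz
        rw [Ideal.map_pow] at this
        exact Ideal.pow_right_mono hmapm s this
      have h2 : π z ∈ Ideal.span {a | a ∈ ys} := hyspow h1
      have h3 : Ideal.span {a | a ∈ ys} =
          Ideal.map π (Ideal.span {a | a ∈ ys.map l}) := by
        rw [Ideal.map_span]
        congr 1
        ext b
        constructor
        · intro hb
          exact ⟨l b, by simpa using ⟨b, hb, rfl⟩, hld b⟩
        · rintro ⟨a, ha, rfl⟩
          simp only [Set.mem_setOf_eq, List.mem_map] at ha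
          obtain ⟨y, hy, rfl⟩ := ha
          rw [hld]
          exact hy
      rw [h3] at h2
      have h4 := Ideal.comap_map_of_surjective π Ideal.Quotient.mk_surjective
        (Ideal.span {a | a ∈ ys.map l})
      have h5 : z ∈ Ideal.comap π (Ideal.map π (Ideal.span {a | a ∈ ys.map l})) := h2
      rw [h4] at h5
      have h6 : Ideal.comap π ⊥ = Ideal.span {x} := by
        rw [← RingHom.ker_eq_comap_bot, hπ, Ideal.mk_ker]
      rw [h6] at h5
      have h7 : {a | a ∈ x :: ys.map l} = insert x {a | a ∈ ys.map l} := by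
        ext a; simp
      rw [h7, Ideal.span_insert, sup_comm]
      exact h5


end Aux

/-- uniform bound `length((R/I) ⊗ M) ≤ C p^{e dim M}` for all `I ⊇ 𝔪^{[p^e]}`. -/
theorem statement0 {R : Type*} [CommRing R] [IsNoetherianRing R] [IsLocalRing R]
    {p : ℕ} [Fact p.Prime] [CharP R p]
    (M : Type*) [AddCommGroup M] [Module R M] [Module.Finite R M]
    (dM : ℕ) (hdM : ringKrullDim (R ⧸ Module.annihilator R M) = dM) :
    ∃ C : ℝ, 0 < C ∧ ∀ (e : ℕ) (I : Ideal R),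
      (maximalIdeal R).bracketPow (p ^ e) ≤ I →
      (lenTensor R M I : ℝ) ≤ C * (p : ℝ) ^ (e * dM) := by
  classical
  have hp2 : 2 ≤ p := (Fact.out : p.Prime).two_le
  have hann_ne : Module.annihilator R M ≠ ⊤ := by
    intro h
    have hsub : Subsingleton (R ⧸ Module.annihilator R M) := by
      refine ⟨fun a b => ?_⟩
      obtain ⟨x, rfl⟩ := Ideal.Quotient.mk_surjective a
      obtain ⟨y, rfl⟩ := Ideal.Quotient.mk_surjective b
      rw [Ideal.Quotient.eq, h]
      trivial
    haveI := hsub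
    haveI : IsEmpty (PrimeSpectrum (R ⧸ Module.annihilator R M)) := inferInstance
    rw [ringKrullDim, Order.krullDim_eq_bot] at hdM
    exact absurd hdM (by simp)
  haveI : IsLocalRing (R ⧸ Module.annihilator R M) := quot_isLocalRing hann_ne
  have hannle : Module.annihilator R M ≤ maximalIdeal R := IsLocalRing.le_maximalIdeal hann_ne
  obtain ⟨ys, s, hyslen, hysmem, hyspow⟩ :=
    sop_exists dM (R ⧸ Module.annihilator R M) (le_of_eq hdM)
  set π := Ideal.Quotient.mk (Module.annihilator R M) with hπ
  set l : (R ⧸ Module.annihilator R M) → R := fun y => (Ideal.Quotient.mk_surjective y).choose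
    with hl
  have hld : ∀ y, π (l y) = y := fun y => (Ideal.Quotient.mk_surjective y).choose_spec
  have hcomapmax := quot_comap_maximalIdeal hannle
  set xs : List R := ys.map l with hxs
  have hxsmem : ∀ x ∈ xs, x ∈ maximalIdeal R := by
    intro z hz
    obtain ⟨y, hy, rfl⟩ := List.mem_map.mp hz
    have h1 : π (l y) ∈ maximalIdeal (R ⧸ Module.annihilator R M) := by
      rw [hld]; exact hysmem y hy
    rw [← hcomapmax]; exact h1
  have hpowR : (maximalIdeal R) ^ s ≤ Ideal.span {a | a ∈ xs} ⊔ Module.annihilator R M := by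
    intro z hz
    have hmapm : Ideal.map π (maximalIdeal R) ≤ maximalIdeal (R ⧸ Module.annihilator R M) := by
      rw [Ideal.map_le_iff_le_comap, hcomapmax]
    have h1 : π z ∈ (maximalIdeal (R ⧸ Module.annihilator R M)) ^ s := by
      have := Ideal.mem_map_of_mem π hz
      rw [Ideal.map_pow] at this
      exact Ideal.pow_right_mono hmapm s this
    have h2 : π z ∈ Ideal.span {a | a ∈ ys} := hyspow h1
    have h3 : Ideal.span {a | a ∈ ys} = Ideal.map π (Ideal.span {a | a ∈ xs}) := by
      rw [Ideal.map_span]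
      congr 1
      ext b
      constructor
      · intro hb
        exact ⟨l b, by simpa [hxs] using ⟨b, hb, rfl⟩, hld b⟩
      · rintro ⟨a, ha, rfl⟩
        simp only [hxs, Set.mem_setOf_eq, List.mem_map] at ha
        obtain ⟨y, hy, rfl⟩ := ha
        rw [hld]; exact hy
    rw [h3] at h2
    have h5 : z ∈ Ideal.comap π (Ideal.map π (Ideal.span {a | a ∈ xs})) := h2
    rw [Ideal.comap_map_of_surjective π Ideal.Quotient.mk_surjective] at h5
    have h6 : Ideal.comap π ⊥ = Module.annihilator R M := by
      rw [← RingHom.ker_eq_comap_bot, hπ, Ideal.mk_ker]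
    rwa [h6] at h5
  set N : Submodule R M := Ideal.span {a | a ∈ xs} • ⊤ with hN
  haveI : Module.Finite R (M ⧸ N) := Module.Finite.quotient R N
  have hkill : ((maximalIdeal R ^ s) • ⊤ : Submodule R (M ⧸ N)) = ⊥ := by
    have hsub : ((maximalIdeal R ^ s) • ⊤ : Submodule R M) ≤ N := by
      calc ((maximalIdeal R ^ s) • ⊤ : Submodule R M)
          ≤ (Ideal.span {a | a ∈ xs} ⊔ Module.annihilator R M) • ⊤ :=
            Submodule.smul_mono_left hpowR
        _ = Ideal.span {a | a ∈ xs} • ⊤ ⊔ (Module.annihilator R M) • ⊤ :=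
            Submodule.sup_smul _ _ _
        _ ≤ N ⊔ ⊥ := sup_le_sup le_rfl (Submodule.smul_le.mpr fun r hr n _ => by
            rw [Module.mem_annihilator] at hr
            rw [hr n]
            exact Submodule.zero_mem ⊥)
        _ = N := sup_bot_eq N
    rw [← le_bot_iff]
    have heq : ((maximalIdeal R ^ s) • ⊤ : Submodule R (M ⧸ N)) =
        Submodule.map N.mkQ ((maximalIdeal R ^ s) • ⊤ : Submodule R M) := by
      rw [Submodule.map_smul'', Submodule.map_top, Submodule.range_mkQ]
    rw [heq]
    calc Submodule.map N.mkQ ((maximalIdeal R ^ s) • ⊤) ≤ Submodule.map N.mkQ N :=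
        Submodule.map_mono hsub
      _ = ⊥ := Submodule.mkQ_map_self N
  have hfin : elen R (M ⧸ N) ≠ ⊤ := elen_ne_top_of_pow_smul_top_eq_bot s (M ⧸ N) hkill
  set c : ℕ := (elen R (M ⧸ N)).toNat with hc
  have hcle : elen R (M ⧸ N) ≤ (c : ℕ∞) := le_of_eq (ENat.coe_toNat hfin).symm
  refine ⟨(c : ℝ) + 1, by positivity, ?_⟩
  intro e I hI
  set q : ℕ := p ^ e with hq
  have hq1 : 1 ≤ q := Nat.one_le_pow _ _ (by omega)
  have hspan : Ideal.span {a | a ∈ xs.map (· ^ q)} ≤ (maximalIdeal R).bracketPow q := by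
    rw [Ideal.span_le]
    rintro b hb
    simp only [Set.mem_setOf_eq, List.mem_map] at hb
    obtain ⟨x, hx, rfl⟩ := hb
    exact Ideal.subset_span ⟨x, hxsmem x hx, rfl⟩
  have key : elen R (M ⧸ (I • ⊤ : Submodule R M)) ≤ ((c * q ^ dM : ℕ) : ℕ∞) := by
    calc elen R (M ⧸ (I • ⊤ : Submodule R M))
        ≤ elen R (M ⧸ ((maximalIdeal R).bracketPow q • ⊤ : Submodule R M)) :=
          elen_quot_mono (Submodule.smul_mono_left hI)
      _ ≤ elen R (M ⧸ (Ideal.span {a | a ∈ xs.map (· ^ q)} • ⊤ : Submodule R M)) :=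
          elen_quot_mono (Submodule.smul_mono_left hspan)
      _ ≤ (q : ℕ∞) ^ xs.length * elen R (M ⧸ (Ideal.span {a | a ∈ xs} • ⊤ : Submodule R M)) :=
          elen_list_pow_le q xs M
      _ ≤ (q : ℕ∞) ^ xs.length * (c : ℕ∞) := mul_le_mul_right hcle _
      _ = ((q ^ xs.length * c : ℕ) : ℕ∞) := by push_cast; ring
      _ ≤ ((c * q ^ dM : ℕ) : ℕ∞) := by
          rw [Nat.cast_le]
          have hxl : xs.length ≤ dM := by simpa [hxs] using hyslen
          calc q ^ xs.length * c ≤ q ^ dM * c :=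
              Nat.mul_le_mul_right c (Nat.pow_le_pow_right hq1 hxl)
            _ = c * q ^ dM := Nat.mul_comm _ _
  have heq2 : elen R (TensorProduct R (R ⧸ I) M) = elen R (M ⧸ (I • ⊤ : Submodule R M)) :=
    elen_eq_of_equiv (TensorProduct.quotTensorEquivQuotSMul M I)
  have hml : lenTensor R M I ≤ c * q ^ dM := by
    have h := mlength_le_of_elen_le (R := R) (M := TensorProduct R (R ⧸ I) M) (heq2 ▸ key)
    exact h
  have hcast : ((c * q ^ dM : ℕ) : ℝ) = (c : ℝ) * ((p : ℝ)) ^ (e * dM) := by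
    rw [hq]
    push_cast
    rw [← pow_mul]
  calc (lenTensor R M I : ℝ) ≤ ((c * q ^ dM : ℕ) : ℝ) := by exact_mod_cast hml
    _ = (c : ℝ) * (p : ℝ) ^ (e * dM) := hcast
    _ ≤ ((c : ℝ) + 1) * (p : ℝ) ^ (e * dM) := by
        have hpos : (0:ℝ) ≤ (p : ℝ) ^ (e * dM) := by positivity
        nlinarith
end

section
/- Let (R, m, k) be an F-finite Noetherian local ring of characteristic p > 0, and write F^e_* R = R^{⊕ a_e} ⊕ M_e as R-modules where M_e has no free direct summands. Let I_e = { r ∈ R : φ(F^e_* r) ∈ m for all φ ∈ Hom_R(F^e_* R, R) }. Then a_e = length_R( F^e_*(R/I_e) ), i.e., a_e equals length_R( Hom_R(F^e_* R, R) / Hom_R(F^e_* R, m) ). -/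
set_option linter.unusedVariables false

open Filter IsLocalRing

/-- The submodule `Hom_R(F^e_* R, 𝔪)` of `Hom_R(F^e_* R, R)`. -/
def homIntoMax (R : Type*) [CommRing R] [IsLocalRing R] (p e : ℕ) [ExpChar R p] :
    Submodule R (FrobMod R p e R →ₗ[R] R) where
  carrier := {φ | ∀ x, φ x ∈ maximalIdeal R}
  add_mem' := by
    intro a b ha hb x
    rw [LinearMap.add_apply]
    exact add_mem (ha x) (hb x)
  zero_mem' := by
    intro x
    rw [LinearMap.zero_apply]
    exact zero_mem _
  smul_mem' := by
    intro c φ h x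
    rw [LinearMap.smul_apply]
    exact Submodule.smul_mem _ c (h x)

section AuxStatement7

/-- If `N` has no free direct summand, every linear map `N → R` has image in the
maximal ideal. -/
lemma aux_hom_mem_max {R N : Type*} [CommRing R] [IsLocalRing R]
    [AddCommGroup N] [Module R N] (h : ¬ HasFreeDirectSummand R N)
    (φ : N →ₗ[R] R) (x : N) : φ x ∈ maximalIdeal R := by
  by_contra hx
  apply h
  have hu : IsUnit (φ x) := by
    by_contra hn
    apply hx
    rw [IsLocalRing.mem_maximalIdeal, mem_nonunits_iff]
    exact hn
  obtain ⟨u, hu⟩ := hu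
  set y : N := ((u⁻¹ : Rˣ) : R) • x with hy
  let s : R →ₗ[R] N := LinearMap.toSpanSingleton R N y
  have hφy : φ y = 1 := by
    rw [hy, map_smul, smul_eq_mul, ← hu, Units.inv_mul]
  have hfs : ∀ r, φ (s r) = r := by
    intro r
    simp [s, LinearMap.toSpanSingleton_apply, map_smul, hφy, smul_eq_mul]
  have hinj : Function.Injective s := by
    intro r r' hr
    have h2 := congrArg φ hr
    rwa [hfs, hfs] at h2
  refine ⟨LinearMap.range s, LinearMap.ker φ, ⟨?_, ?_⟩,
    ⟨(LinearEquiv.ofInjective s hinj).symm⟩⟩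
  · rw [Submodule.disjoint_def]
    rintro z hz1 hz2
    obtain ⟨r, rfl⟩ := hz1
    rw [LinearMap.mem_ker, hfs] at hz2
    rw [hz2, map_zero]
  · rw [codisjoint_iff, eq_top_iff]
    rintro z -
    rw [Submodule.mem_sup]
    refine ⟨s (φ z), ⟨φ z, rfl⟩, z - s (φ z), ?_, by abel⟩
    rw [LinearMap.mem_ker, map_sub, hfs, sub_self]

lemma aux_mlength_congr {R M N : Type*} [Ring R] [AddCommGroup M] [Module R M]
    [AddCommGroup N] [Module R N] (f : M ≃ₗ[R] N) : mlength R M = mlength R N := by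
  unfold mlength
  rw [Order.krullDim_eq_of_orderIso (Submodule.orderIsoMapComap f)]

/-- If `R → k` is a surjective algebra map, the lattices of `k`- and `R`-submodules of a
`k`-module agree. -/
noncomputable def resOrderIso (R k V : Type*) [CommRing R] [CommRing k] [Algebra R k]
    (hs : Function.Surjective (algebraMap R k)) [AddCommGroup V] [Module k V] [Module R V]
    [IsScalarTower R k V] : Submodule k V ≃o Submodule R V where
  toFun W := W.restrictScalars R
  invFun W :=
    { carrier := W
      add_mem' := fun hx hy => W.add_mem hx hy
      zero_mem' := W.zero_mem
      smul_mem' := fun c x hx => by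
        obtain ⟨r, rfl⟩ := hs c
        rw [algebraMap_smul]
        exact W.smul_mem r hx }
  left_inv W := by ext x; exact Iff.rfl
  right_inv W := by ext x; exact Iff.rfl
  map_rel_iff' := Iff.rfl

lemma aux_krullDim_field (K : Type*) [Field K] (n : ℕ) :
    Order.krullDim (Submodule K (Fin n → K)) = (n : WithBot ℕ∞) := by
  have hq : ∀ q : LTSeries (Submodule K (Fin n → K)), q.length ≤ n := by
    intro q
    have hsm : StrictMono fun W : Submodule K (Fin n → K) => Module.finrank K W :=
      fun W₁ W₂ h => Submodule.finrank_lt_finrank_of_lt h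
    have h1 := (q.map _ hsm).head_add_length_le_nat
    have h2 : (q.map _ hsm).last ≤ n := by
      rw [LTSeries.last_map]
      have h3 := Submodule.finrank_le (R := K) (M := Fin n → K) q.last
      simpa [Module.finrank_pi] using h3
    have h4 : (q.map _ hsm).length = q.length := rfl
    omega
  apply le_antisymm
  · rw [Order.krullDim_eq_iSup_length]
    have h5 : (⨆ q : LTSeries (Submodule K (Fin n → K)), (q.length : ℕ∞)) ≤ (n : ℕ∞) :=
      iSup_le fun q => by exact_mod_cast hq q
    exact_mod_cast h5
  · let W : Fin (n + 1) → Submodule K (Fin n → K) := fun i =>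
      { carrier := {v | ∀ j : Fin n, (i : ℕ) ≤ (j : ℕ) → v j = 0}
        add_mem' := fun hx hy j hj => by
          rw [Pi.add_apply, hx j hj, hy j hj, add_zero]
        zero_mem' := fun j _ => rfl
        smul_mem' := fun c x hx j hj => by
          rw [Pi.smul_apply, hx j hj, smul_zero] }
    have hW : StrictMono W := by
      intro i i' hii
      have hii' : (i : ℕ) < (i' : ℕ) := hii
      rw [SetLike.lt_iff_le_and_exists]
      refine ⟨fun v hv j hj => hv j (le_trans (le_of_lt hii') hj), ?_⟩
      have hin : (i : ℕ) < n := lt_of_lt_of_le hii' (Fin.is_le i')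
      refine ⟨Pi.single ⟨(i : ℕ), hin⟩ 1, fun j hj => ?_, fun hmem => ?_⟩
      · have hne : j ≠ ⟨(i : ℕ), hin⟩ := by
          intro hjeq
          rw [hjeq] at hj
          have hval : (((⟨(i : ℕ), hin⟩ : Fin n)) : ℕ) = (i : ℕ) := rfl
          omega
        exact Pi.single_eq_of_ne hne 1
      · have h6 := hmem ⟨(i : ℕ), hin⟩ (le_refl _)
        rw [Pi.single_eq_same] at h6
        exact one_ne_zero h6
    let c : LTSeries (Submodule K (Fin n → K)) :=
      ⟨n, W, fun i => hW Fin.castSucc_lt_succ⟩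
    have h7 := Order.LTSeries.length_le_krullDim c
    exact_mod_cast h7

lemma aux_mlength_pi (R : Type*) [CommRing R] [IsLocalRing R] (n : ℕ) :
    mlength R (Fin n → ResidueField R) = n := by
  have hsurj : Function.Surjective (algebraMap R (ResidueField R)) := by
    rw [ResidueField.algebraMap_eq]
    exact residue_surjective
  unfold mlength
  rw [Order.krullDim_eq_of_orderIso
      (resOrderIso R (ResidueField R) (Fin n → ResidueField R) hsurj).symm,
    aux_krullDim_field]
  rw [show ((n : WithBot ℕ∞)) = ((n : ℕ∞) : WithBot ℕ∞) from rfl, WithBot.unbotD_coe,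
    ENat.toNat_coe]

/-- The key construction: given a decomposition `M ≅ R^n ⊕ Ne` with `Ne` having no free
direct summand, there are surjections `ξ : M → k^n` and `Θ : Hom(M,R) → k^n` whose kernels
are `{x | ∀ φ, φ x ∈ 𝔪}` and `Hom(M, 𝔪)` respectively. -/
lemma aux_applyL_apply {R M N : Type*} [CommSemiring R] [AddCommMonoid M] [AddCommMonoid N]
    [Module R M] [Module R N] (x : M) (f : M →ₗ[R] N) : LinearMap.applyₗ x f = f x := rfl

lemma aux_main {R : Type*} [CommRing R] [IsLocalRing R] {M : Type*} [AddCommGroup M]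
    [Module R M] {n : ℕ} (Fe Ne : Submodule R M) (hc : IsCompl Fe Ne)
    (g : Fe ≃ₗ[R] (Fin n → R)) (hNe : ¬ HasFreeDirectSummand R Ne) :
    ∃ (ξ : M →ₗ[R] (Fin n → ResidueField R))
      (Θ : (M →ₗ[R] R) →ₗ[R] (Fin n → ResidueField R)),
      Function.Surjective ξ ∧ Function.Surjective Θ ∧
      (∀ x, ξ x = 0 ↔ ∀ φ : M →ₗ[R] R, φ x ∈ maximalIdeal R) ∧
      (∀ φ : M →ₗ[R] R, Θ φ = 0 ↔ ∀ x, φ x ∈ maximalIdeal R) := by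
  set prF : M →ₗ[R] Fe := Fe.projectionOnto Ne hc with hprF
  set π : M →ₗ[R] (Fin n → R) := g.toLinearMap ∘ₗ prF with hπdef
  set ι : (Fin n → R) →ₗ[R] M := Fe.subtype ∘ₗ g.symm.toLinearMap with hιdef
  have hπι : ∀ v, π (ι v) = v := by
    intro v
    rw [hπdef, hιdef]
    simp [hprF]
  have hsub : ∀ x : M, x - ι (π x) ∈ Ne := by
    intro x
    have h2 : ι (π x) = (prF x : M) := by
      rw [hπdef, hιdef]
      simp
    rw [h2]
    have h3 := Submodule.projection_add_projection_eq_self hc x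
    have h4 : x - (prF x : M) = ((Ne.projectionOnto Fe hc.symm x : M)) := by
      rw [hprF]
      exact (eq_sub_of_add_eq' h3).symm
    rw [h4]
    exact Submodule.coe_mem _
  have hNmem : ∀ (φ : M →ₗ[R] R) (x : M), x ∈ Ne → φ x ∈ maximalIdeal R := by
    intro φ x hx
    exact aux_hom_mem_max hNe (φ ∘ₗ Ne.subtype) ⟨x, hx⟩
  have expand : ∀ (φ : M →ₗ[R] R) (x : M),
      φ x = (∑ i, π x i • φ (ι (Pi.single i 1))) + φ (x - ι (π x)) := by
    intro φ x
    have h1 : (φ ∘ₗ ι) (π x) = ∑ i, π x i • (φ ∘ₗ ι) (Pi.single i 1) := by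
      have h0 := LinearMap.pi_apply_eq_sum_univ (φ ∘ₗ ι) (π x)
      have hsingle : ∀ i : Fin n, (fun j => if i = j then (1 : R) else 0) = Pi.single i 1 := by
        intro i
        funext j
        simp [Pi.single_apply, eq_comm]
      simp only [hsingle] at h0
      exact h0
    simp only [LinearMap.comp_apply] at h1
    rw [map_sub, ← h1]
    abel
  have keyA : ∀ x : M, (∀ i, π x i ∈ maximalIdeal R) →
      ∀ φ : M →ₗ[R] R, φ x ∈ maximalIdeal R := by
    intro x hx φ
    rw [expand φ x]
    refine add_mem (Submodule.sum_mem _ fun i _ => ?_) (hNmem φ _ (hsub x))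
    rw [smul_eq_mul]
    exact Ideal.mul_mem_right _ _ (hx i)
  have keyB : ∀ φ : M →ₗ[R] R, (∀ i, φ (ι (Pi.single i 1)) ∈ maximalIdeal R) →
      ∀ x : M, φ x ∈ maximalIdeal R := by
    intro φ hφ x
    rw [expand φ x]
    refine add_mem (Submodule.sum_mem _ fun i _ => ?_) (hNmem φ _ (hsub x))
    rw [smul_eq_mul]
    exact Ideal.mul_mem_left _ _ (hφ i)
  refine ⟨LinearMap.pi fun i =>
      (Algebra.linearMap R (ResidueField R)) ∘ₗ ((LinearMap.proj i) ∘ₗ π),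
    LinearMap.pi fun i =>
      (Algebra.linearMap R (ResidueField R)) ∘ₗ (LinearMap.applyₗ (ι (Pi.single i 1))),
    ?_, ?_, ?_, ?_⟩
  · -- surjectivity of ξ
    intro v
    choose u hu using fun i => residue_surjective (R := R) (v i)
    refine ⟨ι u, funext fun i => ?_⟩
    simp only [LinearMap.pi_apply, LinearMap.comp_apply, Algebra.linearMap_apply,
      ResidueField.algebraMap_eq, LinearMap.proj_apply, hπι]
    exact hu i
  · -- surjectivity of Θ
    intro v
    choose u hu using fun i => residue_surjective (R := R) (v i)
    refine ⟨∑ i, u i • ((LinearMap.proj i : (Fin n → R) →ₗ[R] R) ∘ₗ π),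
      funext fun j => ?_⟩
    simp only [LinearMap.pi_apply, LinearMap.comp_apply, Algebra.linearMap_apply,
      ResidueField.algebraMap_eq, aux_applyL_apply, LinearMap.sum_apply,
      LinearMap.smul_apply, LinearMap.proj_apply, hπι]
    have h8 : ∑ i, u i • Pi.single j (1 : R) i = u j := by
      rw [Finset.sum_eq_single j]
      · rw [Pi.single_eq_same, smul_eq_mul, mul_one]
      · intro b _ hb
        rw [Pi.single_eq_of_ne hb, smul_zero]
      · intro hj
        exact absurd (Finset.mem_univ j) hj
    rw [h8]
    exact hu j
  · -- kernel of ξ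
    intro x
    constructor
    · intro hx φ
      refine keyA x (fun i => ?_) φ
      have h9 := congrFun hx i
      simp only [LinearMap.pi_apply, LinearMap.comp_apply, Algebra.linearMap_apply,
        ResidueField.algebraMap_eq, LinearMap.proj_apply, Pi.zero_apply] at h9
      exact (residue_eq_zero_iff _).mp h9
    · intro hx
      funext i
      simp only [LinearMap.pi_apply, LinearMap.comp_apply, Algebra.linearMap_apply,
        ResidueField.algebraMap_eq, LinearMap.proj_apply, Pi.zero_apply]
      rw [residue_eq_zero_iff]
      exact hx ((LinearMap.proj i) ∘ₗ π)
  · -- kernel of Θ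
    intro φ
    constructor
    · intro hφ
      refine keyB φ fun i => ?_
      have h9 := congrFun hφ i
      simp only [LinearMap.pi_apply, LinearMap.comp_apply, Algebra.linearMap_apply,
        ResidueField.algebraMap_eq, aux_applyL_apply, Pi.zero_apply] at h9
      exact (residue_eq_zero_iff _).mp h9
    · intro hφ
      funext i
      simp only [LinearMap.pi_apply, LinearMap.comp_apply, Algebra.linearMap_apply,
        ResidueField.algebraMap_eq, aux_applyL_apply, Pi.zero_apply]
      rw [residue_eq_zero_iff]
      exact hφ _

end AuxStatement7

/-- `a_e = length(F^e_*(R/I_e)) = length(Hom(F^e_* R, R)/Hom(F^e_* R, 𝔪))`. -/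
theorem statement7 {R : Type*} [CommRing R] [IsNoetherianRing R] [IsLocalRing R]
    {p : ℕ} [Fact p.Prime] [CharP R p] (hfin : FFinite R p)
    (a : ℕ → ℕ) (ha : IsFrobSplittingNumbers R p a)
    (e : ℕ) (Ie : Ideal R) (hIe : (Ie : Set R) = splittingSet R p e) :
    a e = mlength R (FrobMod R p e (R ⧸ Ie)) ∧
    a e = mlength R ((FrobMod R p e R →ₗ[R] R) ⧸ homIntoMax R p e) := by
  obtain ⟨Fe, Ne, hc, ⟨g⟩, hNe⟩ := ha e
  obtain ⟨ξ, Θ, hξs, hΘs, hξk, hΘk⟩ := aux_main Fe Ne hc g hNe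
  have hIe' : ∀ r : R, r ∈ Ie ↔
      ∀ φ : FrobMod R p e R →ₗ[R] R, φ (FrobMod.of R p e r) ∈ maximalIdeal R := by
    intro r
    rw [← SetLike.mem_coe, hIe]
    exact Iff.rfl
  -- the linear map `q : F^e_* R → F^e_* (R/Ie)`
  let q : FrobMod R p e R →ₗ[R] FrobMod R p e (R ⧸ Ie) :=
    { toFun := fun x => FrobMod.of R p e (Ideal.Quotient.mk Ie x)
      map_add' := fun x y => map_add (Ideal.Quotient.mk Ie) x y
      map_smul' := fun r x =>
        map_smul Ie.mkQ (iterateFrobenius R p e r) (show R from x) }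
  have hqs : Function.Surjective q := fun z => by
    obtain ⟨x, hx⟩ := Ideal.Quotient.mk_surjective (I := Ie) z
    exact ⟨x, hx⟩
  have hkerq : LinearMap.ker q = LinearMap.ker ξ := by
    ext x
    rw [LinearMap.mem_ker, LinearMap.mem_ker, hξk x]
    show Ideal.Quotient.mk Ie x = 0 ↔ _
    refine Ideal.Quotient.eq_zero_iff_mem.trans ((hIe' x).trans ?_)
    exact Iff.rfl
  have hkerΘ : LinearMap.ker Θ = homIntoMax R p e := by
    ext φ
    rw [LinearMap.mem_ker, hΘk φ]
    exact Iff.rfl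
  have e1 : FrobMod R p e (R ⧸ Ie) ≃ₗ[R] (Fin (a e) → ResidueField R) :=
    ((LinearMap.quotKerEquivOfSurjective q hqs).symm.trans
      (Submodule.quotEquivOfEq _ _ hkerq)).trans (LinearMap.quotKerEquivOfSurjective ξ hξs)
  have e2 : ((FrobMod R p e R →ₗ[R] R) ⧸ homIntoMax R p e) ≃ₗ[R]
      (Fin (a e) → ResidueField R) :=
    (Submodule.quotEquivOfEq _ _ hkerΘ.symm).trans (LinearMap.quotKerEquivOfSurjective Θ hΘs)
  constructor
  · rw [aux_mlength_congr e1, aux_mlength_pi]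
  · rw [aux_mlength_congr e2, aux_mlength_pi]
end
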